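/- (Theorem 1, case b = −1.) Let (Ω, P) be a probability space, n a positive even integer, y : Fin n → Ω → ℝ independent random variables each with Gaussian law of mean μ and variance σ² (σ > 0), p : Fin n → ℝ a balanced ±1 key, and β > 0. Let the hidden bit be b = −1, define w t = y t − β·p t and the extracted bit b̃(ω) = (1/(β·n)) · ∑_t (w t ω) · p t. Then P(b̃ > 0) = (1/2)·erfc(β·√n/(σ·√2)), where erfc x = (2/√π) · ∫_x^∞ exp(−t²) dt. -/

import Mathlib

open MeasureTheory ProbabilityTheory Finset

/-- The complementary error function `erfc x = (2/√π) ∫_x^∞ exp(-t²) dt`. -/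
noncomputable def erfc (x : ℝ) : ℝ :=
  (2 / Real.sqrt Real.pi) * ∫ t in Set.Ioi x, Real.exp (-t ^ 2)


section Aux
open Real
open scoped NNReal ENNReal

lemma gaussianPDFReal_conv (m₁ m₂ : ℝ) (v₁ v₂ : ℝ≥0) (h₁ : v₁ ≠ 0) (h₂ : v₂ ≠ 0) (z : ℝ) :
    ∫ x, gaussianPDFReal m₁ v₁ x * gaussianPDFReal m₂ v₂ (z - x)
      = gaussianPDFReal (m₁ + m₂) (v₁ + v₂) z := by
  have hv₁ : (0:ℝ) < v₁ := lt_of_le_of_ne v₁.2 (by exact_mod_cast Ne.symm h₁)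
  have hv₂ : (0:ℝ) < v₂ := lt_of_le_of_ne v₂.2 (by exact_mod_cast Ne.symm h₂)
  have hV : (0:ℝ) < v₁ + v₂ := by linarith
  have hv₁' : (v₁:ℝ) ≠ 0 := ne_of_gt hv₁
  have hv₂' : (v₂:ℝ) ≠ 0 := ne_of_gt hv₂
  have hV' : (v₁:ℝ) + v₂ ≠ 0 := ne_of_gt hV
  have hV'' : (v₂:ℝ) + v₁ ≠ 0 := by rw [add_comm]; exact hV'
  set d : ℝ := z - m₁ - m₂ with hd
  set k : ℝ := ((v₁:ℝ) + v₂) / (2 * v₁ * v₂) with hk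
  have hkpos : 0 < k := by positivity
  set c : ℝ := m₁ + (v₁:ℝ) * d / ((v₁:ℝ) + v₂) with hc
  have key : ∀ x : ℝ,
      gaussianPDFReal m₁ v₁ x * gaussianPDFReal m₂ v₂ (z - x)
        = ((√(2 * π * v₁))⁻¹ * (√(2 * π * v₂))⁻¹ * rexp (- d^2 / (2 * ((v₁:ℝ) + v₂))))
            * rexp (-k * (x - c)^2) := by
    intro x
    simp only [gaussianPDFReal]
    rw [mul_mul_mul_comm, ← Real.exp_add,
      mul_assoc ((√(2 * π * (v₁:ℝ)))⁻¹ * (√(2 * π * (v₂:ℝ)))⁻¹), ← Real.exp_add]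
    congr 2
    rw [hk, hc, hd]
    field_simp
    ring
  rw [integral_congr_ae (Filter.Eventually.of_forall key), integral_const_mul,
    integral_sub_right_eq_self (fun x => rexp (-k * x ^ 2)) c, integral_gaussian]
  simp only [gaussianPDFReal, NNReal.coe_add]
  have hsq : ((√(2 * π * v₁))⁻¹ * (√(2 * π * v₂))⁻¹ * √(π / k)) = (√(2 * π * ((v₁:ℝ) + v₂)))⁻¹ := by
    rw [hk]
    rw [← Real.sqrt_inv, ← Real.sqrt_inv, ← Real.sqrt_mul (by positivity),
      ← Real.sqrt_mul (by positivity), ← Real.sqrt_inv]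
    congr 1
    field_simp
  rw [mul_right_comm, hsq]
  congr 2
  rw [hd]
  ring


lemma gaussianReal_conv (m₁ m₂ : ℝ) (v₁ v₂ : ℝ≥0) :
    ((gaussianReal m₁ v₁).prod (gaussianReal m₂ v₂)).map (fun p => p.1 + p.2)
      = gaussianReal (m₁ + m₂) (v₁ + v₂) := by
  by_cases h₁ : v₁ = 0
  · subst h₁
    rw [gaussianReal_zero_var, Measure.dirac_prod,
      Measure.map_map measurable_add measurable_prodMk_left]
    rw [show ((fun p : ℝ × ℝ => p.1 + p.2) ∘ Prod.mk m₁) = (fun y => m₁ + y) from rfl,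
      gaussianReal_map_const_add (μ := m₂) (v := v₂) m₁, add_comm m₂ m₁, zero_add]
  by_cases h₂ : v₂ = 0
  · subst h₂
    rw [gaussianReal_zero_var, Measure.prod_dirac,
      Measure.map_map measurable_add measurable_prodMk_right]
    rw [show ((fun p : ℝ × ℝ => p.1 + p.2) ∘ (fun x : ℝ => (x, m₂))) = (fun y => y + m₂) from rfl,
      gaussianReal_map_add_const (μ := m₁) (v := v₁) m₂, add_zero]
  have hV : v₁ + v₂ ≠ 0 := by simp [h₁]
  have hmeas2 : Measurable (fun q : ℝ × ℝ => gaussianPDF (m₂ + q.1) v₂ q.2) := by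
    apply Measurable.ennreal_ofReal
    simp only [gaussianPDFReal]
    fun_prop
  ext s hs
  rw [Measure.map_apply measurable_add hs,
    Measure.prod_apply (measurable_add hs)]
  have hpre : ∀ x : ℝ, (Prod.mk x ⁻¹' ((fun p : ℝ × ℝ => p.1 + p.2) ⁻¹' s))
      = (fun y => x + y) ⁻¹' s := fun x => rfl
  have step1 : ∀ x : ℝ, gaussianReal m₂ v₂ (Prod.mk x ⁻¹' ((fun p : ℝ × ℝ => p.1 + p.2) ⁻¹' s))
      = ∫⁻ z in s, gaussianPDF (m₂ + x) v₂ z := by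
    intro x
    rw [hpre, ← Measure.map_apply (measurable_const_add x) hs, gaussianReal_map_const_add,
      gaussianReal_apply _ h₂ s]
  simp_rw [step1]
  rw [gaussianReal_of_var_ne_zero _ h₁,
    lintegral_withDensity_eq_lintegral_mul _ (measurable_gaussianPDF _ _)
      (Measurable.lintegral_prod_right' hmeas2)]
  simp only [Pi.mul_apply]
  have step2 : ∀ x : ℝ, gaussianPDF m₁ v₁ x * ∫⁻ z in s, gaussianPDF (m₂ + x) v₂ z
      = ∫⁻ z in s, gaussianPDF m₁ v₁ x * gaussianPDF (m₂ + x) v₂ z := by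
    intro x
    rw [lintegral_const_mul _ ((measurable_gaussianPDF _ _))]
  simp_rw [step2]
  rw [lintegral_lintegral_swap]
  · rw [gaussianReal_apply _ hV s]
    refine setLIntegral_congr_fun hs (fun z _ => ?_)
    have : ∀ x : ℝ, gaussianPDF m₁ v₁ x * gaussianPDF (m₂ + x) v₂ z
        = ENNReal.ofReal (gaussianPDFReal m₁ v₁ x * gaussianPDFReal m₂ v₂ (z - x)) := by
      intro x
      rw [gaussianPDF, gaussianPDF, gaussianPDFReal_sub,
        ← ENNReal.ofReal_mul (gaussianPDFReal_nonneg _ _ _)]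
    simp_rw [this]
    rw [← ofReal_integral_eq_lintegral_ofReal, gaussianPDFReal_conv m₁ m₂ v₁ v₂ h₁ h₂ z,
      gaussianPDF]
    · have hbd : ∀ x : ℝ, ‖gaussianPDFReal m₂ v₂ (z - x)‖ ≤ (√(2 * π * v₂))⁻¹ := by
        intro x
        rw [norm_of_nonneg (gaussianPDFReal_nonneg _ _ _), gaussianPDFReal]
        refine mul_le_of_le_one_right (by positivity) ?_
        exact Real.exp_le_one_iff.2 (by
          apply div_nonpos_of_nonpos_of_nonneg (neg_nonpos.2 (sq_nonneg _)) (by positivity))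
      have := (integrable_gaussianPDFReal m₁ v₁).bdd_mul
        ((measurable_gaussianPDFReal m₂ v₂).comp (measurable_const_sub z)).aestronglyMeasurable
        (Filter.Eventually.of_forall hbd)
      exact this.congr (Filter.Eventually.of_forall fun x => mul_comm _ _)
    · exact Filter.Eventually.of_forall fun x =>
        mul_nonneg (gaussianPDFReal_nonneg _ _ _) (gaussianPDFReal_nonneg _ _ _)
  · exact (((measurable_gaussianPDF m₁ v₁).comp measurable_fst).mul hmeas2).aemeasurable


lemma map_sum_gaussian {Ω : Type*} [MeasurableSpace Ω] (P : Measure Ω) [IsProbabilityMeasure P]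
    {ι : Type*} [Fintype ι] (X : ι → Ω → ℝ) (hmeas : ∀ i, Measurable (X i))
    (hindep : iIndepFun X P)
    (m : ι → ℝ) (v : ι → ℝ≥0) (hlaw : ∀ i, P.map (X i) = gaussianReal (m i) (v i))
    (s : Finset ι) :
    P.map (fun ω => ∑ i ∈ s, X i ω) = gaussianReal (∑ i ∈ s, m i) (∑ i ∈ s, v i) := by
  classical
  induction s using Finset.induction_on with
  | empty =>
      simp only [Finset.sum_empty]
      rw [show (fun _ : Ω => (0:ℝ)) = (fun _ => (0:ℝ)) from rfl, Measure.map_const,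
        measure_univ, one_smul, gaussianReal_zero_var]
  | insert a s hi ih =>
      rw [Finset.sum_insert hi, Finset.sum_insert hi]
      have hS : Measurable (fun ω => ∑ i ∈ s, X i ω) := by
        apply Finset.measurable_sum
        exact fun i _ => hmeas i
      have hind : IndepFun (X a) (fun ω => ∑ i ∈ s, X i ω) P := by
        have := (hindep.indepFun_finsetSum_of_notMem hmeas hi).symm
        convert this using 1
        ext ω
        simp [Finset.sum_apply]
      have hmap : P.map (fun ω => X a ω + ∑ i ∈ s, X i ω)
          = ((P.map (X a)).prod (P.map (fun ω => ∑ i ∈ s, X i ω))).map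
              (fun p : ℝ × ℝ => p.1 + p.2) := by
        rw [← (indepFun_iff_map_prod_eq_prod_map_map (hmeas a).aemeasurable
          hS.aemeasurable).mp hind,
          Measure.map_map measurable_add ((hmeas a).prodMk hS)]
        rfl
      rw [show (fun ω => ∑ i ∈ insert a s, X i ω) = (fun ω => X a ω + ∑ i ∈ s, X i ω) by
          ext ω; rw [Finset.sum_insert hi],
        hmap, hlaw a, ih, gaussianReal_conv]

lemma gaussianReal_tail (V : ℝ≥0) (hV : V ≠ 0) (c : ℝ) :
    gaussianReal 0 V (Set.Ioi c)
      = ENNReal.ofReal ((1 / 2) * erfc (c / Real.sqrt (2 * V))) := by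
  have hVpos : (0:ℝ) < V := lt_of_le_of_ne V.2 (by exact_mod_cast Ne.symm hV)
  rw [gaussianReal_apply_eq_integral _ hV]
  congr 1
  have hb : (0:ℝ) < (Real.sqrt (2 * V))⁻¹ := by positivity
  have key : ∀ x : ℝ, gaussianPDFReal 0 V x
      = (√π)⁻¹ * (√(2 * V))⁻¹ * rexp (-((Real.sqrt (2 * V))⁻¹ * x) ^ 2) := by
    intro x
    simp only [gaussianPDFReal, sub_zero]
    have e1 : ((√(2 * (V:ℝ)))⁻¹) ^ 2 = (2 * (V:ℝ))⁻¹ := by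
      rw [← Real.sqrt_inv, Real.sq_sqrt (by positivity)]
    rw [mul_pow, e1, show (2 : ℝ) * π * V = π * (2 * V) by ring,
      Real.sqrt_mul (le_of_lt Real.pi_pos), mul_inv]
    congr 1
    rw [neg_div]
    congr 1
    field_simp
  simp_rw [key]
  rw [MeasureTheory.integral_const_mul, integral_comp_mul_left_Ioi
    (fun t => rexp (-t ^ 2)) c hb, smul_eq_mul, erfc]
  have h2V : Real.sqrt (2 * V) ≠ 0 := by positivity
  rw [show (Real.sqrt (2 * V))⁻¹ * c = c / Real.sqrt (2 * V) by ring]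
  field_simp


end Aux

open scoped NNReal in
/-- Theorem 1 of the paper, case `b = -1`. With hidden bit
`b = -1`, the bit extraction error probability of spread spectrum watermarking
is `P(b̃ > 0) = (1/2) erfc (β √n / (σ √2))`. -/
theorem bit_extraction_error_neg_bit
    {Ω : Type*} [MeasurableSpace Ω] (P : Measure Ω) [IsProbabilityMeasure P]
    (n : ℕ) (hn : 0 < n) (hneven : Even n)
    (y : Fin n → Ω → ℝ) (hmeas : ∀ t, Measurable (y t))
    (hindep : iIndepFun y P)
    (μ σ : ℝ) (hσ : 0 < σ)
    (hlaw : ∀ t, Measure.map (y t) P = gaussianReal μ ⟨σ ^ 2, sq_nonneg σ⟩)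
    (p : Fin n → ℝ) (hp : ∀ t, p t = 1 ∨ p t = -1)
    (hbal : (univ.filter fun t => p t = 1).card
          = (univ.filter fun t => p t = -1).card)
    (β : ℝ) (hβ : 0 < β)
    (w : Fin n → Ω → ℝ) (hw : ∀ t ω, w t ω = y t ω - β * p t)
    (btilde : Ω → ℝ) (hb : ∀ ω, btilde ω = (1 / (β * n)) * ∑ t, w t ω * p t) :
    P {ω | 0 < btilde ω}
      = ENNReal.ofReal
          ((1 / 2) * erfc (β * Real.sqrt n / (σ * Real.sqrt 2))) := by
  classical
  have hn' : (0:ℝ) < n := by exact_mod_cast hn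
  have hβn : (0:ℝ) < β * n := by positivity
  set X : Fin n → Ω → ℝ := fun t ω => p t * y t ω with hX
  have hXmeas : ∀ t, Measurable (X t) := fun t => (hmeas t).const_mul (p t)
  have hXindep : iIndepFun X P :=
    hindep.comp (fun t x => p t * x) (fun t => measurable_const_mul _)
  have hpsq : ∀ t, (p t) ^ 2 = 1 := by
    intro t
    rcases hp t with h | h <;> rw [h] <;> norm_num
  have hXlaw : ∀ t, P.map (X t) = gaussianReal (p t * μ) ⟨σ ^ 2, sq_nonneg σ⟩ := by
    intro t
    have : P.map (X t) = gaussianReal (p t * μ)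
        (⟨(p t)^2, sq_nonneg _⟩ * ⟨σ ^ 2, sq_nonneg σ⟩) := by
      rw [show X t = (fun x => p t * x) ∘ y t from rfl,
        ← Measure.map_map (measurable_const_mul _) (hmeas t), hlaw t,
        ]
      exact gaussianReal_map_const_mul _
    rw [this]
    congr 1
    ext
    exact (NNReal.coe_mul _ _).trans (show (p t)^2 * σ^2 = σ^2 by rw [hpsq t, one_mul])
  -- sum of the key
  have hpsum : ∑ t, p t = 0 := by
    rw [← Finset.sum_filter_add_sum_filter_not univ (fun t => p t = 1)]
    have h1 : ∑ t ∈ univ.filter (fun t => p t = 1), p t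
        = (univ.filter fun t => p t = 1).card := by
      rw [Finset.sum_congr rfl (fun t ht => (Finset.mem_filter.1 ht).2)]
      simp
    have hne : (univ.filter fun t => ¬ p t = 1) = (univ.filter fun t => p t = -1) := by
      ext t
      simp only [Finset.mem_filter, Finset.mem_univ, true_and]
      rcases hp t with h | h <;> simp [h] <;> norm_num
    have h2 : ∑ t ∈ univ.filter (fun t => ¬ p t = 1), p t
        = -((univ.filter fun t => p t = -1).card : ℝ) := by
      rw [hne, Finset.sum_congr rfl (fun t ht => (Finset.mem_filter.1 ht).2)]
      simp
    rw [h1, h2, hbal]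
    ring
  set V : ℝ≥0 := ∑ _t : Fin n, (⟨σ ^ 2, sq_nonneg σ⟩ : ℝ≥0) with hV
  have hVcoe : (V : ℝ) = n * σ ^ 2 := by
    rw [hV]
    push_cast
    exact (NNReal.coe_sum _ _).trans (show ∑ _t : Fin n, σ ^ 2 = (n:ℝ) * σ ^ 2 by simp)
  have hVne : V ≠ 0 := by
    intro h
    have : (V:ℝ) = 0 := by exact_mod_cast h
    rw [hVcoe] at this
    have := pow_pos hσ 2
    nlinarith
  have hmapS : P.map (fun ω => ∑ t, X t ω) = gaussianReal 0 V := by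
    rw [map_sum_gaussian P X hXmeas hXindep (fun t => p t * μ)
      (fun _ => ⟨σ ^ 2, sq_nonneg σ⟩) hXlaw univ, ← Finset.sum_mul, hpsum, zero_mul]
  -- event rewriting
  have hSmeas : Measurable (fun ω => ∑ t, X t ω) :=
    Finset.measurable_sum _ (fun t _ => hXmeas t)
  have hevent : {ω | 0 < btilde ω} = (fun ω => ∑ t, X t ω) ⁻¹' Set.Ioi (β * n) := by
    ext ω
    simp only [Set.mem_setOf_eq, Set.mem_preimage, Set.mem_Ioi]
    rw [hb]
    have hsum : ∑ t, w t ω * p t = (∑ t, X t ω) - β * n := by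
      have : ∀ t, w t ω * p t = X t ω - β * (p t)^2 := by
        intro t
        rw [hw, hX]
        ring
      rw [Finset.sum_congr rfl (fun t _ => this t), Finset.sum_sub_distrib]
      simp [hpsq, Finset.sum_const, mul_comm]
    rw [hsum]
    constructor
    · intro h
      by_contra hc
      push_neg at hc
      have : (1 / (β * n)) * ((∑ t, X t ω) - β * n) ≤ 0 := by
        apply mul_nonpos_of_nonneg_of_nonpos (by positivity)
        linarith
      linarith
    · intro h
      have : 0 < (∑ t, X t ω) - β * n := by linarith
      positivity
  rw [hevent, ← Measure.map_apply hSmeas measurableSet_Ioi, hmapS,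
    gaussianReal_tail V hVne (β * n)]
  congr 2
  rw [show 2 * (V:ℝ) = σ^2 * 2 * n by rw [hVcoe]; ring,
    Real.sqrt_mul (by positivity), Real.sqrt_mul (sq_nonneg σ), Real.sqrt_sq hσ.le]
  have h : Real.sqrt n * Real.sqrt n = (n:ℝ) := Real.mul_self_sqrt (Nat.cast_nonneg n)
  have hsn : (0:ℝ) < Real.sqrt n := Real.sqrt_pos.2 hn'
  congr 1
  field_simp
  linear_combination (-1) * h
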